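/- arXiv:0910.0439 — 2 statements merged into one kernel-verified Lean document; each statement's English description precedes it below -/
import Mathlib

section
/- For every topological space X, the nowhere density number nwd(X) equals the open density number od(X) := min over nonempty open U of the density character d(U) of the subspace U. -/
open Set Cardinal

/-- The nowhere density number of a space `X`:
the least cardinality of a subset whose closure has nonempty interior. -/
noncomputable def nwdNumber (X : Type*) [TopologicalSpace X] : Cardinal :=
  sInf {c | ∃ A : Set X, (interior (closure A)).Nonempty ∧ c = #A}

/-- The open density number of a space `X`:
the least, over nonempty open `U`, of the density character of the
subspace `U` (least size of a subset of `U` whose closure contains `U`). -/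
noncomputable def odNumber (X : Type*) [TopologicalSpace X] : Cardinal :=
  sInf {c | ∃ U : Set X, IsOpen U ∧ U.Nonempty ∧
    c = sInf {d | ∃ A : Set X, A ⊆ U ∧ U ⊆ closure A ∧ d = #A}}

/-- For every nonempty topological space, `nwd(X) = od(X)`. -/
theorem nwdNumber_eq_odNumber (X : Type*) [TopologicalSpace X] [Nonempty X] :
    nwdNumber X = odNumber X := by
  apply le_antisymm
  · -- nwd ≤ od
    apply le_csInf
    · exact ⟨_, univ, isOpen_univ, univ_nonempty, rfl⟩
    rintro c ⟨U, hUo, hUne, rfl⟩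
    have hne : {d | ∃ A : Set X, A ⊆ U ∧ U ⊆ closure A ∧ d = #A}.Nonempty :=
      ⟨#U, U, Subset.rfl, subset_closure, rfl⟩
    obtain ⟨A, hAU, hUcl, hA⟩ := csInf_mem hne
    rw [hA]
    apply csInf_le (OrderBot.bddBelow _)
    refine ⟨A, ⟨hUne.choose, ?_⟩, rfl⟩
    exact interior_maximal hUcl hUo hUne.choose_spec
  · -- od ≤ nwd
    have hne : {c | ∃ A : Set X, (interior (closure A)).Nonempty ∧ c = #A}.Nonempty := by
      refine ⟨#(univ : Set X), univ, ?_, rfl⟩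
      simp
    obtain ⟨A₀, hA₀, hA₀eq⟩ := csInf_mem hne
    set U := interior (closure A₀) with hU
    have hdense : U ⊆ closure (A₀ ∩ U) := by
      intro x hx
      rw [mem_closure_iff]
      intro V hVo hxV
      have hx' : x ∈ closure A₀ := interior_subset hx
      rw [mem_closure_iff] at hx'
      obtain ⟨y, hyVU, hyA⟩ := hx' (V ∩ U) (hVo.inter isOpen_interior) ⟨hxV, hx⟩
      exact ⟨y, hyVU.1, hyA, hyVU.2⟩
    calc odNumber X ≤ sInf {d | ∃ A : Set X, A ⊆ U ∧ U ⊆ closure A ∧ d = #A} := by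
          apply csInf_le (OrderBot.bddBelow _)
          exact ⟨U, isOpen_interior, hA₀, rfl⟩
      _ ≤ #(A₀ ∩ U : Set X) := csInf_le (OrderBot.bddBelow _)
            ⟨A₀ ∩ U, inter_subset_right, hdense, rfl⟩
      _ ≤ #A₀ := Cardinal.mk_le_mk_of_subset inter_subset_left
      _ = nwdNumber X := hA₀eq.symm
end

section
/- Let X be a topological space, n < ω, and suppose X admits a partition X = D_0 ∪ ... ∪ D_{n-1} into n pairwise disjoint dense subsets, each of which is hereditarily irresolvable (no nonempty subspace of D_k is resolvable). Then X is not (n+1)-resolvable. -/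
open Set

/-- A subset `D` of a space is hereditarily irresolvable if no nonempty
subspace of `D` admits two disjoint dense subsets. (Density of `A` in the
subspace `S` means `S ⊆ closure A`.) -/
def HereditarilyIrresolvable {X : Type*} [TopologicalSpace X] (D : Set X) : Prop :=
  ∀ S ⊆ D, S.Nonempty →
    ¬ ∃ A B : Set X, A ⊆ S ∧ B ⊆ S ∧ Disjoint A B ∧ S ⊆ closure A ∧ S ⊆ closure B

/-- In a finite closed cover of a nonempty open set, some member has interior
meeting the open set. -/
lemma aux_closed_cover {X : Type*} [TopologicalSpace X] {n : ℕ} (C : Fin n → Set X)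
    (hC : ∀ k, IsClosed (C k)) (s : Finset (Fin n)) :
    ∀ (U : Set X), IsOpen U → U.Nonempty → U ⊆ ⋃ k ∈ s, C k →
      ∃ k, (U ∩ interior (C k)).Nonempty := by
  induction s using Finset.induction with
  | empty =>
    intro U hU hne hsub
    simp only [Finset.notMem_empty, iUnion_of_empty, iUnion_empty] at hsub
    exact absurd (hsub hne.choose_spec) (notMem_empty _)
  | @insert k s hk ih =>
    intro U hU hne hsub
    by_cases h : (U ∩ (C k)ᶜ).Nonempty
    · obtain ⟨k', hk'⟩ := ih (U ∩ (C k)ᶜ) (hU.inter (hC k).isOpen_compl) h (by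
        intro x hx
        have := hsub hx.1
        simp only [Finset.mem_insert, iUnion_iUnion_eq_or_left, mem_union] at this ⊢
        rcases this with h1 | h1
        · exact absurd h1 hx.2
        · exact h1)
      exact ⟨k', hk'.mono fun x hx => ⟨hx.1.1, hx.2⟩⟩
    · have hUC : U ⊆ C k := by
        intro x hx
        by_contra hxc
        exact h ⟨x, hx, hxc⟩
      refine ⟨k, ?_⟩
      obtain ⟨x, hx⟩ := hne
      exact ⟨x, hx, interior_maximal hUC hU hx⟩

/-- A finite intersection of dense open sets is dense. -/
lemma aux_dense_iInter {X : Type*} [TopologicalSpace X] {m : ℕ} (V : Fin m → Set X)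
    (ho : ∀ i, IsOpen (V i)) (hd : ∀ i, Dense (V i)) : Dense (⋂ i, V i) := by
  have : ∀ s : Finset (Fin m), Dense (⋂ i ∈ s, V i) := by
    intro s
    induction s using Finset.induction with
    | empty => simp [dense_univ]
    | @insert k s hk ih =>
      have : (⋂ i ∈ insert k s, V i) = V k ∩ ⋂ i ∈ s, V i := by
        simp [Finset.mem_insert, iInter_iInter_eq_or_left]
      rw [this]
      exact (hd k).inter_of_isOpen_left ih (ho k)
  have h := this Finset.univ
  simpa using h

/-- If `X` is partitioned into `n` pairwise disjoint dense, hereditarily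
irresolvable subsets, then `X` is not `(n+1)`-resolvable. -/
theorem not_succ_resolvable_of_partition_heredIrresolvable
    {X : Type*} [TopologicalSpace X] [Nonempty X] (n : ℕ)
    (D : Fin n → Set X)
    (hcover : ⋃ k, D k = univ)
    (hdisj : Pairwise (Function.onFun Disjoint D))
    (hdense : ∀ k, Dense (D k))
    (hhi : ∀ k, HereditarilyIrresolvable (D k)) :
    ¬ ∃ E : Fin (n + 1) → Set X,
      Pairwise (Function.onFun Disjoint E) ∧ ∀ i, Dense (E i) := by
  rintro ⟨E, hEdisj, hEdense⟩
  set C : Fin (n + 1) → Fin n → Set X := fun i k => closure (E i ∩ D k) with hCdef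
  -- each `⋃ k, interior (C i k)` is open and dense
  have hVopen : ∀ i, IsOpen (⋃ k, interior (C i k)) :=
    fun i => isOpen_iUnion fun k => isOpen_interior
  have hVdense : ∀ i, Dense (⋃ k, interior (C i k)) := by
    intro i
    rw [dense_iff_inter_open]
    intro U hU hne
    have hcov : U ⊆ ⋃ k ∈ Finset.univ, C i k := by
      have h1 : Dense (⋃ k, E i ∩ D k) := by
        have he : (⋃ k, E i ∩ D k) = E i := by
          rw [← inter_iUnion, hcover, inter_univ]
        rw [he]; exact hEdense i
      have h2 : IsClosed (⋃ k, C i k) :=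
        isClosed_iUnion_of_finite fun k => isClosed_closure
      have h3 : (⋃ k, E i ∩ D k) ⊆ ⋃ k, C i k :=
        iUnion_mono fun k => subset_closure
      have h4 : univ ⊆ ⋃ k, C i k := by
        rw [← h1.closure_eq]
        exact h2.closure_subset_iff.mpr h3
      intro x hx
      have := h4 (mem_univ x)
      simpa using this
    obtain ⟨k, y, hyU, hyint⟩ :=
      aux_closed_cover (C i) (fun k => isClosed_closure) Finset.univ U hU hne hcov
    exact ⟨y, hyU, mem_iUnion.mpr ⟨k, hyint⟩⟩
  -- their intersection is dense, so nonempty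
  have hW : Dense (⋂ i, ⋃ k, interior (C i k)) :=
    aux_dense_iInter _ hVopen hVdense
  obtain ⟨x, hx⟩ := hW.nonempty
  choose f hf using fun i => mem_iUnion.mp (mem_iInter.mp hx i)
  -- pigeonhole
  obtain ⟨i, j, hij, hfe⟩ :=
    Fintype.exists_ne_map_eq_of_card_lt f (by simp)
  set k := f i with hk
  set V : Set X := interior (C i k) ∩ interior (C j k) with hVdef
  have hVo : IsOpen V := isOpen_interior.inter isOpen_interior
  have hxV : x ∈ V := ⟨hf i, by rw [hfe]; exact hf j⟩
  -- the nonempty subspace of D k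
  obtain ⟨z, hz⟩ := (hdense k).inter_open_nonempty V hVo ⟨x, hxV⟩
  refine hhi k (V ∩ D k) inter_subset_right ⟨z, hz⟩
    ⟨V ∩ (E i ∩ D k), V ∩ (E j ∩ D k), ?_, ?_, ?_, ?_, ?_⟩
  · exact inter_subset_inter_right V (inter_subset_right)
  · exact inter_subset_inter_right V (inter_subset_right)
  · exact (hEdisj hij).mono (fun y hy => hy.2.1) (fun y hy => hy.2.1)
  · intro y hy
    have hy1 : y ∈ V ∩ closure (E i ∩ D k) := ⟨hy.1, interior_subset hy.1.1⟩
    exact hVo.inter_closure hy1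
  · intro y hy
    have hy1 : y ∈ V ∩ closure (E j ∩ D k) := ⟨hy.1, interior_subset hy.1.2⟩
    exact hVo.inter_closure hy1
end
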